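/- arXiv:2105.03927 — 5 statements merged into one kernel-verified Lean document; each statement's English description precedes it below -/
import Mathlib

section
/- Let $n$ be a positive integer and $a$ a nonzero complex number. Then $\sum_{k=1}^{n} \frac{(-a)^k}{k} \sum_{j=1}^{k} \frac{1}{j} \sum_{p=1}^{j} \frac{(-1/a)^p}{p} = \sum_{p=0}^{n-1} \Big\{ \sum_{k=1}^{n-p} \Big( \frac{H_{p+k} - H_k}{(p+k)k} + \frac{1}{k^2(p+k)} \Big) \Big\} (-a)^p$. -/
/-- The `n`-th harmonic number `H_n = ∑_{k=1}^n 1/k`, with `H_0 = 0`. -/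
noncomputable def H (n : ℕ) : ℝ := ∑ i ∈ Finset.range n, (1 : ℝ) / (i + 1)

lemma Hsum (k q : ℕ) (hk : 1 ≤ k) :
    ∑ j ∈ Finset.Icc k (k+q), (1:ℂ)/(j:ℂ) = ((H (q+k) - H k : ℝ) : ℂ) + 1/(k:ℂ) := by
  have h1 : H (q+k) - H k = ∑ i ∈ Finset.Ico k (q+k), (1:ℝ)/(i+1) := by
    rw [H, H, ← Finset.sum_Ico_eq_sub _ (by omega)]
  rw [h1]
  push_cast
  have h2 : Finset.Icc k (k+q) = insert k (Finset.Icc (k+1) (k+q)) := by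
    ext x; simp; omega
  rw [h2, Finset.sum_insert (by simp)]
  have h3 : ∑ j ∈ Finset.Icc (k+1) (k+q), (1:ℂ)/(j:ℂ)
      = ∑ i ∈ Finset.Ico k (q+k), (1:ℂ)/((i:ℂ)+1) := by
    apply Finset.sum_nbij' (i := fun j => j - 1) (j := fun i => i + 1)
    · intro x hx; simp at hx ⊢; omega
    · intro x hx; simp at hx ⊢; omega
    · intro x hx; simp at hx; omega
    · intro x hx; omega
    · intro x hx; simp at hx ⊢
      have : ((x - 1 : ℕ) : ℂ) + 1 = (x : ℂ) := by
        have : (1:ℕ) ≤ x := by omega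
        push_cast [Nat.cast_sub this]; ring
      rw [this]
  rw [h3]; ring

/-- For `n` a positive integer and `a` a nonzero complex number,
`∑_{k=1}^n ((-a)^k/k) ∑_{j=1}^k (1/j) ∑_{p=1}^j ((-1/a)^p/p)
 = ∑_{p=0}^{n-1} { ∑_{k=1}^{n-p} ( (H_{p+k}-H_k)/((p+k)k) + 1/(k²(p+k)) ) } (-a)^p`. -/
theorem triple_sum_identity (n : ℕ) (hn : 0 < n) (a : ℂ) (ha : a ≠ 0) :
    ∑ k ∈ Finset.Icc 1 n, (-a) ^ k / (k : ℂ) *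
        ∑ j ∈ Finset.Icc 1 k, (1 : ℂ) / (j : ℂ) *
          ∑ p ∈ Finset.Icc 1 j, (-1 / a) ^ p / (p : ℂ) =
      ∑ p ∈ Finset.range n,
        (∑ k ∈ Finset.Icc 1 (n - p),
            (((H (p + k) - H k : ℝ) : ℂ) / (((p : ℂ) + (k : ℂ)) * (k : ℂ)) +
              1 / ((k : ℂ) ^ 2 * ((p : ℂ) + (k : ℂ))))) * (-a) ^ p := by
  have hA : (-a) ≠ 0 := neg_ne_zero.mpr ha
  have step1 : ∑ k ∈ Finset.Icc 1 n, (-a) ^ k / (k : ℂ) *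
        ∑ j ∈ Finset.Icc 1 k, (1 : ℂ) / (j : ℂ) *
          ∑ p ∈ Finset.Icc 1 j, (-1 / a) ^ p / (p : ℂ)
      = ∑ k ∈ Finset.Icc 1 n, ∑ j ∈ Finset.Icc 1 k, ∑ p ∈ Finset.Icc 1 j,
          (-a) ^ (k - p) / ((k:ℂ) * (j:ℂ) * (p:ℂ)) := by
    simp_rw [Finset.mul_sum]
    refine Finset.sum_congr rfl fun k hk => Finset.sum_congr rfl fun j hj =>
      Finset.sum_congr rfl fun p hp => ?_
    simp only [Finset.mem_Icc] at hk hj hp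
    have hpk : p ≤ k := le_trans hp.2 hj.2
    have hkey : (-a) ^ (k - p) = (-a) ^ k * (-1/a) ^ p := by
      have h0 : (-1/a : ℂ) = (-a)⁻¹ := by field_simp
      rw [h0, inv_pow]; exact pow_sub₀ (-a) hA hpk
    rw [hkey]; ring
  have step3 : ∀ q ∈ Finset.range n,
      (∑ k ∈ Finset.Icc 1 (n - q),
            (((H (q + k) - H k : ℝ) : ℂ) / (((q : ℂ) + (k : ℂ)) * (k : ℂ)) +
              1 / ((k : ℂ) ^ 2 * ((q : ℂ) + (k : ℂ))))) * (-a) ^ q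
      = ∑ p ∈ Finset.Icc 1 (n - q), ∑ j ∈ Finset.Icc p (p + q),
          (-a) ^ q / (((p:ℂ) + (q:ℂ)) * (j:ℂ) * (p:ℂ)) := by
    intro q _
    rw [Finset.sum_mul]
    refine Finset.sum_congr rfl fun k hk => ?_
    simp only [Finset.mem_Icc] at hk
    have hsum : ∑ j ∈ Finset.Icc k (k+q), (-a) ^ q / (((k:ℂ) + (q:ℂ)) * (j:ℂ) * (k:ℂ))
        = (-a) ^ q / (((k:ℂ) + (q:ℂ)) * (k:ℂ)) * (((H (q + k) - H k : ℝ) : ℂ) + 1/(k:ℂ)) := by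
      rw [← Hsum k q hk.1, Finset.mul_sum]
      exact Finset.sum_congr rfl fun j hj => by generalize ((k:ℂ) + (q:ℂ)) = x; ring
    rw [hsum]
    simp only [add_comm (q:ℂ) (k:ℂ)]
    generalize ((k:ℂ) + (q:ℂ)) = x
    ring
  rw [step1, Finset.sum_congr rfl step3,
    Finset.sum_sigma', Finset.sum_sigma', Finset.sum_sigma', Finset.sum_sigma']
  refine Finset.sum_nbij' (i := fun x => ⟨⟨x.1.1 - x.2, x.2⟩, x.1.2⟩)
    (j := fun y => ⟨⟨y.1.2 + y.1.1, y.2⟩, y.1.2⟩) ?_ ?_ ?_ ?_ ?_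
  · rintro ⟨⟨k, j⟩, p⟩ hx
    simp only [Finset.mem_sigma, Finset.mem_Icc, Finset.mem_range] at hx ⊢
    omega
  · rintro ⟨⟨q, p⟩, j⟩ hy
    simp only [Finset.mem_sigma, Finset.mem_Icc, Finset.mem_range] at hy ⊢
    omega
  · rintro ⟨⟨k, j⟩, p⟩ hx
    simp only [Finset.mem_sigma, Finset.mem_Icc] at hx
    simp only [Sigma.mk.inj_iff, heq_eq_eq, Prod.mk.injEq, and_true]
    omega
  · rintro ⟨⟨q, p⟩, j⟩ hy
    simp only [Finset.mem_sigma, Finset.mem_Icc, Finset.mem_range] at hy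
    simp only [Sigma.mk.inj_iff, heq_eq_eq, Prod.mk.injEq, and_true]
    omega
  · rintro ⟨⟨k, j⟩, p⟩ hx
    simp only [Finset.mem_sigma, Finset.mem_Icc] at hx
    have hpk : p ≤ k := by omega
    have h1 : ((p:ℂ) + ((k - p : ℕ):ℂ)) = (k:ℂ) := by
      push_cast [Nat.cast_sub hpk]; ring
    simp only [h1]
end

section
/- Let $a$ be a real number with $a \le -2$ or $a \ge 0$, and let $s$ be a positive real number. Then $\int_{0}^{1} \frac{1-x^s}{1-x} \log\Big(1 - \frac{1-x}{1+a}\Big)\, dx = \sum_{k=1}^{\infty} \frac{1}{k^2 (a+1)^k \binom{s+k}{k}} - \mathrm{Li}_2\Big(\frac{1}{a+1}\Big)$. -/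
open MeasureTheory intervalIntegral Set

/-- The dilogarithm function `Li₂(x) = ∑_{k=1}^∞ x^k/k²`. -/
noncomputable def Li2 (x : ℝ) : ℝ := ∑' k : ℕ, x ^ (k + 1) / ((k : ℝ) + 1) ^ 2

/-- The generalized binomial coefficient `C(s+k, k) = Γ(s+k+1)/(Γ(k+1)Γ(s+1))`. -/
noncomputable def gbinom (s : ℝ) (k : ℕ) : ℝ :=
  Real.Gamma (s + k + 1) / (Real.Gamma ((k : ℝ) + 1) * Real.Gamma (s + 1))

lemma beta_real (s : ℝ) (hs : 0 < s) (n : ℕ) :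
    ∫ x in (0:ℝ)..1, x ^ s * (1 - x) ^ n
      = Real.Gamma (s+1) * Real.Gamma (n+1) / Real.Gamma (s+n+2) := by
  have h := Complex.Gamma_mul_Gamma_eq_betaIntegral
    (s := ((s+1:ℝ) : ℂ)) (t := ((n+1:ℝ) : ℂ)) (by simp; linarith) (by simp; positivity)
  have hbeta : Complex.betaIntegral ((s+1:ℝ) : ℂ) ((n+1:ℝ) : ℂ)
      = ((∫ x in (0:ℝ)..1, x ^ s * (1 - x) ^ n : ℝ) : ℂ) := by
    rw [Complex.betaIntegral, ← intervalIntegral.integral_ofReal]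
    refine intervalIntegral.integral_congr fun x hx => ?_
    rw [uIcc_of_le zero_le_one] at hx
    have hx0 : (0:ℝ) ≤ x := hx.1
    have e1 : ((s+1:ℝ) : ℂ) - 1 = ((s:ℝ) : ℂ) := by push_cast; ring
    have e2 : ((n+1:ℝ) : ℂ) - 1 = ((n:ℕ) : ℂ) := by push_cast; ring
    rw [e1, e2, Complex.cpow_natCast]
    push_cast [← Complex.ofReal_cpow hx0 s]
    ring
  rw [hbeta] at h
  have e : ((s+1:ℝ):ℂ) + ((n+1:ℝ):ℂ) = ((s+n+2:ℝ):ℂ) := by push_cast; ring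
  rw [e] at h
  simp only [Complex.Gamma_ofReal, ← Complex.ofReal_mul] at h
  rw [Complex.ofReal_inj] at h
  have hΓ : 0 < Real.Gamma (s+n+2) := Real.Gamma_pos_of_pos (by positivity)
  field_simp
  linarith [h]

lemma int_one_sub_pow (n : ℕ) : ∫ x in (0:ℝ)..1, (1-x)^n = 1/(n+1) := by
  have := intervalIntegral.integral_comp_sub_left (a := (0:ℝ)) (b := 1)
    (fun x : ℝ => x ^ n) 1
  simp only [sub_zero, sub_self] at this
  rw [this, integral_pow]
  norm_num

lemma summable_aux : Summable (fun n : ℕ => 1/((n:ℝ)+1)^2) := by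
  have h : Summable (fun n : ℕ => 1/((n:ℝ))^2) := Real.summable_one_div_nat_pow.mpr one_lt_two
  have := (summable_nat_add_iff 1).mpr h
  refine this.congr fun n => ?_
  push_cast; ring

set_option maxHeartbeats 2000000 in
/-- For real `a` with `a ≤ -2` or `a ≥ 0` and real `s > 0`,
`∫₀¹ (1-x^s)/(1-x) log(1 - (1-x)/(1+a)) dx
  = ∑_{k=1}^∞ 1/(k²(a+1)^k C(s+k,k)) - Li₂(1/(a+1))`. -/
theorem integral_log_one_sub (a s : ℝ) (ha : a ≤ -2 ∨ 0 ≤ a) (hs : 0 < s) :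
    ∫ x in (0 : ℝ)..1, (1 - x ^ s) / (1 - x) * Real.log (1 - (1 - x) / (1 + a)) =
      (∑' k : ℕ, 1 / (((k : ℝ) + 1) ^ 2 * (a + 1) ^ (k + 1) * gbinom s (k + 1))) -
        Li2 (1 / (a + 1)) := by
  have hane : a + 1 ≠ 0 := by rcases ha with h|h <;> intro hc <;> linarith
  set t : ℝ := 1/(a+1) with htdef
  have habs1 : 1 ≤ |a+1| := by
    rcases ha with h|h
    · rw [abs_of_nonpos (by linarith)]; linarith
    · rw [abs_of_nonneg (by linarith)]; linarith
  have hta : |t| ≤ 1 := by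
    rw [htdef, abs_div, abs_one]
    exact div_le_one_of_le₀ habs1 (abs_nonneg _)
  have hgs : Continuous fun x : ℝ => x ^ s := Real.continuous_rpow_const hs.le
  set F : ℕ → ℝ → ℝ := fun n x => -(t^(n+1)/(n+1)) * ((1 - x^s) * (1-x)^n) with hF
  have hFc : ∀ n, Continuous (F n) := by
    intro n
    exact continuous_const.mul (((continuous_const.sub hgs)).mul (by continuity))
  have hint : ∀ n, IntegrableOn (F n) (Ioc (0:ℝ) 1) := fun n =>
    (hFc n).integrableOn_Ioc
  -- bound on x^s
  have hxs01 : ∀ x ∈ Icc (0:ℝ) 1, 0 ≤ x ^ s ∧ x ^ s ≤ 1 := by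
    intro x hx
    constructor
    · exact Real.rpow_nonneg hx.1 s
    · calc x ^ s ≤ 1 ^ s := Real.rpow_le_rpow hx.1 hx.2 hs.le
        _ = 1 := Real.one_rpow s
  -- pointwise norm bound
  have hFbound : ∀ n, ∀ x ∈ Ioc (0:ℝ) 1, ‖F n x‖ ≤ (1-x)^n / (n+1) := by
    intro n x hx
    have h1 : 0 ≤ 1 - x := by linarith [hx.2]
    obtain ⟨hxa, hxb⟩ := hxs01 x ⟨hx.1.le, hx.2⟩
    have h2 : 0 ≤ 1 - x^s := by linarith
    have h3 : (1:ℝ) ≤ (n:ℝ)+1 := by have := Nat.cast_nonneg (α:=ℝ) n; linarith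
    rw [hF]
    simp only [norm_mul, norm_neg, Real.norm_eq_abs, abs_div, abs_pow]
    have hn1 : |((n:ℝ)+1)| = (n:ℝ)+1 := abs_of_pos (by positivity)
    rw [hn1]
    have hb1 : |t|^(n+1) ≤ 1 := pow_le_one₀ (abs_nonneg t) hta
    have hb2 : |1 - x^s| ≤ 1 := by rw [abs_of_nonneg h2]; linarith
    have hb3 : |1 - x| ^ n = (1-x)^n := by rw [abs_of_nonneg h1]
    rw [hb3]
    calc |t|^(n+1)/((n:ℝ)+1) * (|1 - x^s| * (1-x)^n)
        ≤ 1/((n:ℝ)+1) * (1 * (1-x)^n) := by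
          apply mul_le_mul
          · gcongr
          · exact mul_le_mul_of_nonneg_right hb2 (by positivity)
          · positivity
          · positivity
      _ = (1-x)^n / ((n:ℝ)+1) := by ring
  have hG1 : 0 < Real.Gamma (s+1) := Real.Gamma_pos_of_pos (by linarith)
  have hGn : forall n : Nat, 0 < Real.Gamma ((n:Real)+1) := fun n => Real.Gamma_pos_of_pos (by positivity)
  have hGsn : forall n : Nat, 0 < Real.Gamma (s+(n:Real)+2) := fun n => Real.Gamma_pos_of_pos (by positivity)
  have hi1 : forall n : Nat, IntervalIntegrable (fun x:Real => (1-x)^n) volume 0 1 :=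
    fun n => (by continuity : Continuous fun x:Real => (1-x)^n).intervalIntegrable 0 1
  have hi2 : forall n : Nat, IntervalIntegrable (fun x:Real => x^s * (1-x)^n) volume 0 1 :=
    fun n => (hgs.mul (by continuity)).intervalIntegrable 0 1
  have hGle : forall n : Nat,
      Real.Gamma (s+1) * Real.Gamma (n+1) / Real.Gamma (s+n+2) <= 1/((n:Real)+1) := by
    intro n
    rw [<- beta_real s hs n, <- int_one_sub_pow n]
    refine intervalIntegral.integral_mono_on zero_le_one (hi2 n) (hi1 n) fun x hx => ?_
    have h := hxs01 x hx
    calc x^s * (1-x)^n <= 1 * (1-x)^n := by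
          have h1 : (0:Real) <= 1 - x := by linarith [hx.2]
          exact mul_le_mul_of_nonneg_right h.2 (by positivity)
      _ = (1-x)^n := one_mul _
  have hsum : Summable fun n : Nat => integral (volume.restrict (Ioc (0:Real) 1)) fun x => norm (F n x) := by
    refine Summable.of_nonneg_of_le
      (fun n => integral_nonneg fun x => norm_nonneg _) (fun n => ?_) summable_aux
    have hgint : IntegrableOn (fun x:Real => (1-x)^n/((n:Real)+1)) (Ioc (0:Real) 1) :=
      (by continuity : Continuous fun x:Real => (1-x)^n/((n:Real)+1)).integrableOn_Ioc
    refine (setIntegral_mono_on (hint n).norm hgint measurableSet_Ioc (hFbound n)).trans ?_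
    rw [<- intervalIntegral.integral_of_le zero_le_one, intervalIntegral.integral_div,
      int_one_sub_pow]
    rw [div_div, <- sq]
  have hpt : forall x, x ∈ Ioc (0:Real) 1 ->
      (1 - x^s)/(1-x) * Real.log (1 - (1-x)/(1+a)) = tsum (fun n => F n x) := by
    intro x hx
    rcases eq_or_lt_of_le hx.2 with h1 | h1
    . subst h1
      simp [hF, Real.one_rpow]
    . have h1x : 0 < 1 - x := by linarith
      have hu : |t*(1-x)| < 1 := by
        rw [abs_mul, abs_of_pos h1x]
        calc |t| * (1-x) <= 1*(1-x) := mul_le_mul_of_nonneg_right hta h1x.le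
          _ < 1 := by linarith [hx.1]
      have h2 := (Real.hasSum_pow_div_log_of_abs_lt_one hu).mul_left (-((1 - x^s)/(1-x)))
      have harg : 1 - (1-x)/(1+a) = 1 - t*(1-x) := by rw [htdef]; ring
      rw [harg]
      have he : -((1 - x^s)/(1-x)) * -Real.log (1 - t*(1-x))
          = (1 - x^s)/(1-x) * Real.log (1 - t*(1-x)) := by ring
      rw [he] at h2
      rw [<- h2.tsum_eq]
      refine tsum_congr fun n => ?_
      simp only [hF]
      have hxne : (1-x) ≠ 0 := h1x.ne'
      have hfac : (t*(1-x))^(n+1) = (t^(n+1)*(1-x)^n)*(1-x) := by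
        rw [mul_pow, pow_succ (1-x) n]; ring
      rw [hfac]
      field_simp
  have hIval : forall n : Nat, (integral (volume.restrict (Ioc (0:Real) 1)) (F n))
      = t^(n+1)/((n:Real)+1) * (Real.Gamma (s+1) * Real.Gamma (n+1) / Real.Gamma (s+n+2))
        - t^(n+1)/((n:Real)+1)^2 := by
    intro n
    rw [<- intervalIntegral.integral_of_le zero_le_one]
    have he : forall x, x ∈ uIcc (0:Real) 1 -> F n x
        = -(t^(n+1)/((n:Real)+1)) * ((1-x)^n - x^s*(1-x)^n) := by
      intro x _; simp only [hF]; ring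
    rw [intervalIntegral.integral_congr he, intervalIntegral.integral_const_mul,
      intervalIntegral.integral_sub (hi1 n) (hi2 n), int_one_sub_pow, beta_real s hs n]
    have h3 := (hGsn n).ne'
    have hk1 : ((n:Real)+1) ≠ 0 := by positivity
    field_simp
    ring
  have hA : Summable fun n : Nat =>
      t^(n+1)/((n:Real)+1) * (Real.Gamma (s+1) * Real.Gamma (n+1) / Real.Gamma (s+n+2)) := by
    refine Summable.of_norm_bounded summable_aux fun n => ?_
    have hG := hGle n
    have hGpos : (0:Real) <= Real.Gamma (s+1) * Real.Gamma (n+1) / Real.Gamma (s+n+2) :=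
      le_of_lt (by have := hG1; have := hGn n; have := hGsn n; positivity)
    rw [Real.norm_eq_abs, abs_mul, abs_of_nonneg hGpos, abs_div, abs_pow,
      abs_of_pos (show (0:Real) < (n:Real)+1 by positivity)]
    calc |t|^(n+1)/((n:Real)+1) * (Real.Gamma (s+1) * Real.Gamma (n+1) / Real.Gamma (s+n+2))
        <= 1/((n:Real)+1) * (1/((n:Real)+1)) := by
          apply mul_le_mul _ hG hGpos (by positivity)
          gcongr
          exact pow_le_one₀ (abs_nonneg t) hta
      _ = 1/((n:Real)+1)^2 := by rw [pow_two, div_mul_div_comm, one_mul]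
  have hB : Summable fun n : Nat => t^(n+1)/((n:Real)+1)^2 := by
    refine Summable.of_norm_bounded summable_aux fun n => ?_
    have h1 : (0:Real) < ((n:Real)+1)^2 := by positivity
    rw [Real.norm_eq_abs, abs_div, abs_pow t, abs_of_pos h1]
    gcongr
    exact pow_le_one₀ (abs_nonneg t) hta
  rw [intervalIntegral.integral_of_le zero_le_one,
    setIntegral_congr_fun measurableSet_Ioc hpt,
    <- MeasureTheory.integral_tsum_of_summable_integral_norm (fun n => hint n) hsum,
    tsum_congr hIval, Summable.tsum_sub hA hB]
  congr 1
  . refine tsum_congr fun k => ?_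
    have hk1 : ((k:Real)+1) ≠ 0 := by positivity
    rw [gbinom]
    push_cast
    rw [show s + ((k:Real)+1) + 1 = s + (k:Real) + 2 by ring,
      Real.Gamma_add_one (show ((k:Real)+1) ≠ 0 from hk1)]
    rw [htdef]
    have h3 := (hGsn k).ne'
    have h2 := (hGn k).ne'
    have h1a : (1 + a) ≠ 0 := by rwa [add_comm]
    field_simp
    have hp : (1 + a)⁻¹ ^ k * (1 + a) ^ k = 1 := by rw [inv_pow, inv_mul_cancel₀ (pow_ne_zero k h1a)]
    linear_combination (a * (1 + a)⁻¹ + (1 + a)⁻¹) * hp + inv_mul_cancel₀ h1a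
end

section
/- Let $k$ be a positive integer and let $x$ be a real number with $0 < |x| < 1$. Then $\sum_{j=1}^{\infty} \frac{H_j x^j}{(j+1)(j+k+1)} = \frac{1}{2xk}\Big(1 - \frac{1}{x^k}\Big)\log^2(1-x) + \frac{\log(1-x)}{k x^{k+1}} \Big( H_k - \sum_{j=1}^{k} \frac{x^j}{j} \Big) + \frac{1}{k x^{k+1}} \sum_{j=1}^{k} \frac{1}{j} \sum_{p=1}^{j} \frac{x^p}{p}$. -/
noncomputable def P (x : ℝ) (m : ℕ) : ℝ := ∑ p ∈ Finset.Icc 1 m, x ^ p / (p : ℝ)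

lemma H_succ (n : ℕ) : H (n + 1) = H n + 1 / ((n : ℝ) + 1) := by
  simp [H, Finset.sum_range_succ]

lemma H_eq_Icc (n : ℕ) : H n = ∑ t ∈ Finset.Icc 1 n, (1 : ℝ) / (t : ℝ) := by
  rw [H, ← Finset.Ico_add_one_right_eq_Icc, Finset.sum_Ico_eq_sum_range]
  simp [add_comm]

lemma P_eq_range (x : ℝ) (m : ℕ) : P x m = ∑ i ∈ Finset.range m, x ^ (i + 1) / ((i : ℝ) + 1) := by
  rw [P, ← Finset.Ico_add_one_right_eq_Icc, Finset.sum_Ico_eq_sum_range]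
  simp [add_comm]

lemma P_succ (x : ℝ) (m : ℕ) : P x (m + 1) = P x m + x ^ (m + 1) / ((m : ℝ) + 1) := by
  rw [P_eq_range, P_eq_range, Finset.sum_range_succ]

open Real Finset

section
variable {x : ℝ}

lemma summable_norm_logser (hx1 : |x| < 1) :
    Summable fun n : ℕ => ‖x ^ (n + 1) / ((n : ℝ) + 1)‖ := by
  apply Summable.of_nonneg_of_le (fun n => norm_nonneg _) (fun n => ?_)
    (((summable_geometric_of_lt_one (abs_nonneg x) hx1).mul_right |x|))
  rw [norm_div, norm_pow, Real.norm_eq_abs, Real.norm_eq_abs, ← pow_succ]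
  have h1 : (1 : ℝ) ≤ |((n : ℝ) + 1)| := by
    rw [abs_of_nonneg (by positivity)]; linarith [Nat.cast_nonneg (α := ℝ) n]
  calc |x| ^ (n + 1) / |((n : ℝ) + 1)| ≤ |x| ^ (n + 1) / 1 := by
        apply div_le_div_of_nonneg_left (by positivity) one_pos h1
    _ = |x| ^ (n + 1) := by ring

/-- tail of the log series -/
lemma hasSum_log_tail (hx1 : |x| < 1) (m : ℕ) :
    HasSum (fun j : ℕ => x ^ (j + m + 1) / ((j : ℝ) + (m : ℝ) + 1))
      (-Real.log (1 - x) - P x m) := by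
  have h0 := Real.hasSum_pow_div_log_of_abs_lt_one hx1
  have h1 : HasSum (fun j : ℕ => x ^ ((j + m) + 1) / ((((j + m) : ℕ) : ℝ) + 1))
      (-Real.log (1 - x) - P x m) := by
    refine (hasSum_nat_add_iff (f := fun n : ℕ => x ^ (n + 1) / ((n : ℝ) + 1)) m).2 ?_
    convert h0 using 1
    · rfl
    rw [P_eq_range]
    ring
  convert h1 using 2 with j
  push_cast
  ring_nf

lemma conv_range (n : ℕ) :
    ∑ i ∈ Finset.range (n + 1), (1 : ℝ) / (((i : ℝ) + 1) * ((n : ℝ) - (i : ℝ) + 1)) =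
      2 * H (n + 1) / ((n : ℝ) + 2) := by
  have key : ∀ i ∈ Finset.range (n + 1),
      (1 : ℝ) / (((i : ℝ) + 1) * ((n : ℝ) - (i : ℝ) + 1)) =
        (1 / ((n : ℝ) + 2)) * (1 / ((i : ℝ) + 1) + 1 / ((n : ℝ) - (i : ℝ) + 1)) := by
    intro i hi
    rw [Finset.mem_range] at hi
    have hi' : (i : ℝ) ≤ (n : ℝ) := by exact_mod_cast Nat.lt_succ_iff.1 hi
    have h1 : (0 : ℝ) < (i : ℝ) + 1 := by positivity
    have h2 : (0 : ℝ) < (n : ℝ) - (i : ℝ) + 1 := by linarith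
    field_simp
    ring
  rw [Finset.sum_congr rfl key, ← Finset.mul_sum, Finset.sum_add_distrib]
  have h3 : ∑ i ∈ Finset.range (n + 1), (1 : ℝ) / ((n : ℝ) - (i : ℝ) + 1) = H (n + 1) := by
    have hr := Finset.sum_range_reflect (fun j : ℕ => (1 : ℝ) / ((j : ℝ) + 1)) (n + 1)
    have hc : ∀ i ∈ Finset.range (n + 1),
        (1 : ℝ) / ((n : ℝ) - (i : ℝ) + 1) =
          (fun j : ℕ => (1 : ℝ) / ((j : ℝ) + 1)) (n + 1 - 1 - i) := by
      intro i hi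
      rw [Finset.mem_range] at hi
      have hle : i ≤ n := Nat.lt_succ_iff.1 hi
      simp only []
      congr 1
      rw [show n + 1 - 1 - i = n - i from by omega, Nat.cast_sub hle]
    rw [Finset.sum_congr rfl hc, hr, H]
  rw [h3, H]
  ring

lemma hasSum_logsq (hx1 : |x| < 1) :
    HasSum (fun n : ℕ => H (n + 1) * x ^ (n + 2) / ((n : ℝ) + 2)) (Real.log (1 - x) ^ 2 / 2) := by
  have hs := hasSum_sum_range_mul_of_summable_norm (summable_norm_logser hx1)
    (summable_norm_logser hx1)
  rw [(Real.hasSum_pow_div_log_of_abs_lt_one hx1).tsum_eq] at hs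
  have hval : -Real.log (1 - x) * -Real.log (1 - x) = Real.log (1 - x) ^ 2 := by ring
  rw [hval] at hs
  have hterm : ∀ n : ℕ,
      ∑ i ∈ Finset.range (n + 1), x ^ (i + 1) / ((i : ℝ) + 1) * (x ^ (n - i + 1) / (((n - i : ℕ) : ℝ) + 1)) =
        2 * (H (n + 1) * x ^ (n + 2) / ((n : ℝ) + 2)) := by
    intro n
    have : ∀ i ∈ Finset.range (n + 1),
        x ^ (i + 1) / ((i : ℝ) + 1) * (x ^ (n - i + 1) / (((n - i : ℕ) : ℝ) + 1)) =
          x ^ (n + 2) * ((1 : ℝ) / (((i : ℝ) + 1) * ((n : ℝ) - (i : ℝ) + 1))) := by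
      intro i hi
      rw [Finset.mem_range] at hi
      have hle : i ≤ n := Nat.lt_succ_iff.1 hi
      rw [Nat.cast_sub hle]
      rw [div_mul_div_comm, ← pow_add, div_eq_mul_one_div]
      congr 2
      omega
    rw [Finset.sum_congr rfl this, ← Finset.mul_sum, conv_range]
    ring
  have hs2 : HasSum (fun n : ℕ => 2 * (H (n + 1) * x ^ (n + 2) / ((n : ℝ) + 2)))
      (Real.log (1 - x) ^ 2) := by
    convert hs using 2 with n
    · rfl
    exact (hterm n).symm
  have h2 := hs2.div_const 2
  convert h2 using 2 with n
  · rfl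
  ring

noncomputable def M (x : ℝ) (k : ℕ) : ℝ :=
  ∑ m ∈ Finset.range k, H (m + 1) * x ^ (m + 2) / ((m : ℝ) + 2)

lemma M_succ (x : ℝ) (k : ℕ) :
    M x (k + 1) = M x k + H (k + 1) * x ^ (k + 2) / ((k : ℝ) + 2) := by
  rw [M, M, Finset.sum_range_succ]

lemma P_one (x : ℝ) : P x 1 = x := by simp [P]

lemma lemI (x : ℝ) (k : ℕ) :
    ∑ i ∈ Finset.range k, 1 / ((i : ℝ) + 1) * x ^ (i + 1) * P x (k - i) = 2 * M x k := by
  induction k with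
  | zero => simp [M]
  | succ k ih =>
    rw [Finset.sum_range_succ]
    have hsplit : ∀ i ∈ Finset.range k,
        1 / ((i : ℝ) + 1) * x ^ (i + 1) * P x (k + 1 - i) =
          1 / ((i : ℝ) + 1) * x ^ (i + 1) * P x (k - i) +
            x ^ (k + 2) * (1 / (((i : ℝ) + 1) * ((k : ℝ) - (i : ℝ) + 1))) := by
      intro i hi
      rw [Finset.mem_range] at hi
      have hle : i ≤ k := le_of_lt hi
      have hpow : x ^ (i + 1) * x ^ (k - i + 1) = x ^ (k + 2) := by
        rw [← pow_add]; congr 1; omega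
      rw [show k + 1 - i = (k - i) + 1 from by omega, P_succ, Nat.cast_sub hle, mul_add]
      congr 1
      rw [show 1 / ((i : ℝ) + 1) * x ^ (i + 1) * (x ^ (k - i + 1) / ((k : ℝ) - (i : ℝ) + 1)) =
        (x ^ (i + 1) * x ^ (k - i + 1)) * (1 / (((i : ℝ) + 1) * ((k : ℝ) - (i : ℝ) + 1))) from by
          rw [one_div (((i : ℝ) + 1) * ((k : ℝ) - (i : ℝ) + 1)), mul_inv]; ring, hpow]
    rw [Finset.sum_congr rfl hsplit, Finset.sum_add_distrib, ih, ← Finset.mul_sum]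
    have hconv := conv_range k
    rw [Finset.sum_range_succ] at hconv
    have h2 : ∑ i ∈ Finset.range k, (1 : ℝ) / (((i : ℝ) + 1) * ((k : ℝ) - (i : ℝ) + 1)) =
        2 * H (k + 1) / ((k : ℝ) + 2) - 1 / ((k : ℝ) + 1) := by
      have : ((k : ℝ) - (k : ℝ) + 1) = 1 := by ring
      rw [this] at hconv
      rw [mul_one] at hconv
      linarith [hconv]
    rw [h2, M_succ, show k + 1 - k = 1 from by omega, P_one]
    have hk1 : ((k : ℝ) + 1) ≠ 0 := by positivity
    have hk2 : ((k : ℝ) + 2) ≠ 0 := by positivity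
    field_simp
    ring

lemma lemII (x : ℝ) (k : ℕ) :
    ∑ i ∈ Finset.range k, 1 / ((i : ℝ) + 1) * P x (i + 1) = H k * P x (k + 1) - M x k := by
  induction k with
  | zero => simp [M, H]
  | succ k ih =>
    rw [Finset.sum_range_succ, ih, M_succ, H_succ,
      show P x (k + 1 + 1) = P x (k + 1) + x ^ (k + 2) / ((k : ℝ) + 2) from by
        rw [P_succ]; push_cast; ring_nf]
    have hk1 : ((k : ℝ) + 1) ≠ 0 := by positivity
    have hk2 : ((k : ℝ) + 2) ≠ 0 := by positivity
    field_simp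
    ring

lemma H_add (a b : ℕ) :
    H (a + b) = H a + ∑ i ∈ Finset.range b, 1 / ((a : ℝ) + (i : ℝ) + 1) := by
  induction b with
  | zero => simp
  | succ b ih =>
    rw [show a + (b + 1) = (a + b) + 1 from rfl, H_succ, ih, Finset.sum_range_succ]
    push_cast; ring

lemma sumc (x L : ℝ) (k : ℕ) :
    ∑ i ∈ Finset.range k, 1 / ((k : ℝ) - (i : ℝ)) *
        (x ^ (k - i) * (-L - P x (i + 1)) - (-L - P x (k + 1))) =
      L * (H k - P x k) + H k * P x (k + 1) - 2 * M x k := by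
  rw [← Finset.sum_range_reflect]
  have hc : ∀ i ∈ Finset.range k,
      1 / ((k : ℝ) - ((k - 1 - i : ℕ) : ℝ)) *
          (x ^ (k - (k - 1 - i)) * (-L - P x ((k - 1 - i) + 1)) - (-L - P x (k + 1))) =
        L * (1 / ((i : ℝ) + 1)) - L * (x ^ (i + 1) / ((i : ℝ) + 1)) +
          P x (k + 1) * (1 / ((i : ℝ) + 1)) - 1 / ((i : ℝ) + 1) * x ^ (i + 1) * P x (k - i) := by
    intro i hi
    rw [Finset.mem_range] at hi
    rw [show k - (k - 1 - i) = i + 1 from by omega, show (k - 1 - i) + 1 = k - i from by omega]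
    have hcast : ((k - 1 - i : ℕ) : ℝ) = (k : ℝ) - 1 - (i : ℝ) := by
      rw [show k - 1 - i = k - (1 + i) from by omega, Nat.cast_sub (by omega : 1 + i ≤ k)]
      push_cast; ring
    rw [hcast, show (k : ℝ) - ((k : ℝ) - 1 - (i : ℝ)) = (i : ℝ) + 1 from by ring]
    ring
  rw [Finset.sum_congr rfl hc]
  simp only [Finset.sum_add_distrib, Finset.sum_sub_distrib, ← Finset.mul_sum]
  rw [lemI, ← P_eq_range, ← H]
  ring

lemma hasSum_B {x : ℝ} (hx1 : |x| < 1) (k : ℕ) :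
    HasSum (fun j : ℕ => H (j + 1) * x ^ (j + k + 2) / ((j : ℝ) + (k : ℝ) + 2))
      (Real.log (1 - x) ^ 2 / 2 - Real.log (1 - x) * (H k - P x k) -
        ∑ j ∈ Finset.Icc 1 k, 1 / (j : ℝ) * P x j) := by
  set L := Real.log (1 - x) with hL
  -- shifted log-square series
  have hshift : HasSum (fun j : ℕ => H (j + k + 1) * x ^ (j + k + 2) / ((j : ℝ) + (k : ℝ) + 2))
      (L ^ 2 / 2 - M x k) := by
    have h1 : HasSum (fun j : ℕ => H ((j + k) + 1) * x ^ ((j + k) + 2) / ((((j + k) : ℕ) : ℝ) + 2))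
        (L ^ 2 / 2 - M x k) := by
      refine (hasSum_nat_add_iff (f := fun n : ℕ => H (n + 1) * x ^ (n + 2) / ((n : ℝ) + 2)) k).2 ?_
      have hM : ∑ i ∈ Finset.range k, H (i + 1) * x ^ (i + 2) / ((i : ℝ) + 2) = M x k := rfl
      rw [hM, sub_add_cancel]
      exact hasSum_logsq hx1
    convert h1 using 2 with j
    · push_cast; ring_nf
  -- the correction double series
  have hDi : ∀ i ∈ Finset.range k,
      HasSum (fun j : ℕ => x ^ (j + k + 2) * (1 / (((j : ℝ) + (k : ℝ) + 2) * ((j : ℝ) + (i : ℝ) + 2))))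
        (1 / ((k : ℝ) - (i : ℝ)) *
          (x ^ (k - i) * (-L - P x (i + 1)) - (-L - P x (k + 1)))) := by
    intro i hi
    rw [Finset.mem_range] at hi
    have h2 : HasSum (fun j : ℕ => x ^ (k - i) * (x ^ (j + (i + 1) + 1) / ((j : ℝ) + ((i : ℕ) + 1 : ℕ) + 1)))
        (x ^ (k - i) * (-L - P x (i + 1))) := (hasSum_log_tail hx1 (i + 1)).mul_left _
    have h3 := hasSum_log_tail hx1 (k + 1)
    have h4 := (h2.sub h3).mul_left (1 / ((k : ℝ) - (i : ℝ)))
    convert h4 using 2 with j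
    · rfl
    have hki : ((k : ℝ) - (i : ℝ)) ≠ 0 := by
      have : (i : ℝ) < (k : ℝ) := by exact_mod_cast hi
      linarith
    have hd1 : ((j : ℝ) + (k : ℝ) + 2) ≠ 0 := by positivity
    have hd2 : ((j : ℝ) + (i : ℝ) + 2) ≠ 0 := by positivity
    have hpow : x ^ (k - i) * x ^ (j + (i + 1) + 1) = x ^ (j + k + 2) := by
      rw [← pow_add]; congr 1; omega
    push_cast
    rw [show x ^ (k - i) * (x ^ (j + (i + 1) + 1) / ((j : ℝ) + ((i : ℝ) + 1) + 1)) =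
        (x ^ (k - i) * x ^ (j + (i + 1) + 1)) / ((j : ℝ) + (i : ℝ) + 2) from by ring, hpow]
    rw [show x ^ (j + (k + 1) + 1) = x ^ (j + k + 2) from by ring_nf]
    rw [show (j : ℝ) + ((k : ℝ) + 1) + 1 = (j : ℝ) + (k : ℝ) + 2 from by ring]
    field_simp
    ring
  have hD := hasSum_sum hDi
  rw [sumc] at hD
  -- subtract
  have hB' := hshift.sub hD
  have hterm : ∀ j : ℕ,
      H (j + k + 1) * x ^ (j + k + 2) / ((j : ℝ) + (k : ℝ) + 2) -
          ∑ i ∈ Finset.range k, x ^ (j + k + 2) *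
            (1 / (((j : ℝ) + (k : ℝ) + 2) * ((j : ℝ) + (i : ℝ) + 2))) =
        H (j + 1) * x ^ (j + k + 2) / ((j : ℝ) + (k : ℝ) + 2) := by
    intro j
    have hH : H (j + k + 1) = H (j + 1) + ∑ i ∈ Finset.range k, 1 / ((j : ℝ) + (i : ℝ) + 2) := by
      rw [show j + k + 1 = (j + 1) + k from by omega, H_add]
      congr 1
      apply Finset.sum_congr rfl
      intro i _
      push_cast
      ring_nf
    rw [hH, add_mul, add_div]
    rw [show ∑ i ∈ Finset.range k, x ^ (j + k + 2) *
        (1 / (((j : ℝ) + (k : ℝ) + 2) * ((j : ℝ) + (i : ℝ) + 2))) =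
        (∑ i ∈ Finset.range k, 1 / ((j : ℝ) + (i : ℝ) + 2)) * x ^ (j + k + 2) / ((j : ℝ) + (k : ℝ) + 2) from by
      rw [Finset.sum_mul, Finset.sum_div]
      apply Finset.sum_congr rfl
      intro i _
      rw [one_div (((j : ℝ) + (k : ℝ) + 2) * ((j : ℝ) + (i : ℝ) + 2)), mul_inv]
      ring]
    ring
  rw [show (fun j : ℕ => H (j + k + 1) * x ^ (j + k + 2) / ((j : ℝ) + (k : ℝ) + 2) -
      ∑ i ∈ Finset.range k, x ^ (j + k + 2) *
        (1 / (((j : ℝ) + (k : ℝ) + 2) * ((j : ℝ) + (i : ℝ) + 2)))) =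
      (fun j : ℕ => H (j + 1) * x ^ (j + k + 2) / ((j : ℝ) + (k : ℝ) + 2)) from funext hterm] at hB'
  convert hB' using 1
  · rfl
  have hR : ∑ j ∈ Finset.Icc 1 k, 1 / (j : ℝ) * P x j =
      ∑ i ∈ Finset.range k, 1 / ((i : ℝ) + 1) * P x (i + 1) := by
    rw [← Finset.Ico_add_one_right_eq_Icc, Finset.sum_Ico_eq_sum_range]
    simp [add_comm]
  rw [hR, lemII]
  ring


/-- For `k` a positive integer and real `x` with `0 < |x| < 1`,
`∑_{j=1}^∞ H_j x^j/((j+1)(j+k+1))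
  = (1/(2xk))(1 - 1/x^k) log²(1-x)
    + (log(1-x)/(k x^{k+1})) (H_k - ∑_{j=1}^k x^j/j)
    + (1/(k x^{k+1})) ∑_{j=1}^k (1/j) ∑_{p=1}^j x^p/p`. -/
theorem harmonic_series_partial_fraction (k : ℕ) (hk : 0 < k) (x : ℝ)
    (hx0 : 0 < |x|) (hx1 : |x| < 1) :
    ∑' j : ℕ, H (j + 1) * x ^ (j + 1) / (((j : ℝ) + 2) * ((j : ℝ) + (k : ℝ) + 2)) =
      1 / (2 * x * (k : ℝ)) * (1 - 1 / x ^ k) * Real.log (1 - x) ^ 2 +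
        Real.log (1 - x) / ((k : ℝ) * x ^ (k + 1)) *
          (H k - ∑ j ∈ Finset.Icc 1 k, x ^ j / (j : ℝ)) +
        1 / ((k : ℝ) * x ^ (k + 1)) *
          ∑ j ∈ Finset.Icc 1 k, (1 : ℝ) / (j : ℝ) * ∑ p ∈ Finset.Icc 1 j, x ^ p / (p : ℝ) := by
  have hxne : x ≠ 0 := fun h => by simp [h] at hx0
  have hkR : ((k : ℝ)) ≠ 0 := by
    exact (Nat.cast_pos.2 hk).ne'
  set L := Real.log (1 - x) with hL
  have hA := hasSum_logsq hx1
  have hB := hasSum_B hx1 k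
  have hS := (hA.mul_left (1 / ((k : ℝ) * x))).sub (hB.mul_left (1 / ((k : ℝ) * x ^ (k + 1))))
  have hterm : ∀ j : ℕ,
      1 / ((k : ℝ) * x) * (H (j + 1) * x ^ (j + 2) / ((j : ℝ) + 2)) -
        1 / ((k : ℝ) * x ^ (k + 1)) * (H (j + 1) * x ^ (j + k + 2) / ((j : ℝ) + (k : ℝ) + 2)) =
      H (j + 1) * x ^ (j + 1) / (((j : ℝ) + 2) * ((j : ℝ) + (k : ℝ) + 2)) := by
    intro j
    have h1 : ((j : ℝ) + 2) ≠ 0 := by positivity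
    have h2 : ((j : ℝ) + (k : ℝ) + 2) ≠ 0 := by positivity
    field_simp
    ring
  rw [show (fun j : ℕ =>
      1 / ((k : ℝ) * x) * (H (j + 1) * x ^ (j + 2) / ((j : ℝ) + 2)) -
        1 / ((k : ℝ) * x ^ (k + 1)) * (H (j + 1) * x ^ (j + k + 2) / ((j : ℝ) + (k : ℝ) + 2))) =
      (fun j : ℕ => H (j + 1) * x ^ (j + 1) / (((j : ℝ) + 2) * ((j : ℝ) + (k : ℝ) + 2))) from
    funext hterm] at hS
  rw [hS.tsum_eq]
  have hP : P x k = ∑ j ∈ Finset.Icc 1 k, x ^ j / (j : ℝ) := rfl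
  have hR : (∑ j ∈ Finset.Icc 1 k, 1 / (j : ℝ) * P x j) =
      ∑ j ∈ Finset.Icc 1 k, (1 : ℝ) / (j : ℝ) * ∑ p ∈ Finset.Icc 1 j, x ^ p / (p : ℝ) := rfl
  rw [← hP, ← hR]
  have hxk : x ^ k ≠ 0 := pow_ne_zero _ hxne
  have hxk1 : x ^ (k + 1) ≠ 0 := pow_ne_zero _ hxne
  field_simp
  ring
end
end

section
/- For every nonnegative integer $n$ and every real number $a \ge 0$, $\int_{0}^{1} \frac{1-x^n}{1-x} \log(x+a)\, dx = H_n \log(a+1) - \mathrm{Li}_2\Big(\frac{1}{a+1}\Big) + \sum_{k=1}^{\infty} \frac{1}{k^2 (a+1)^k \binom{n+k}{k}}$. -/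
open MeasureTheory intervalIntegral Real Set

lemma beta_nat (k : ℕ) : ∀ n : ℕ, ∫ x in (0:ℝ)..1, x ^ n * (1 - x) ^ k
    = (n.factorial * k.factorial : ℝ) / (n + k + 1).factorial := by
  induction k with
  | zero =>
    intro n
    simp only [pow_zero, mul_one, integral_pow, one_pow, Nat.factorial, Nat.add_zero]
    push_cast
    rw [zero_pow (by omega), sub_zero, div_eq_div_iff (by positivity) (by positivity)]
    ring
  | succ k ih =>
    intro n
    have hu : ∀ x ∈ uIcc (0:ℝ) 1, HasDerivAt (fun x : ℝ => (1-x)^(k+1))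
        ((k+1 : ℝ) * (1-x)^k * (-1)) x := fun x _ =>
      (((hasDerivAt_id x).const_sub 1).pow (k+1)).congr_deriv
        (by simp only [id_eq]; push_cast; ring)
    have hv : ∀ x ∈ uIcc (0:ℝ) 1, HasDerivAt (fun x : ℝ => x^(n+1) / (n+1)) (x^n) x := by
      intro x _
      have := (hasDerivAt_pow (n+1) x).div_const ((n:ℝ)+1)
      convert this using 1
      rfl
      rfl
      push_cast
      field_simp
    have h1 : ∫ x in (0:ℝ)..1, (1-x)^(k+1) * x^n
        = ((k+1:ℝ)/(n+1)) * ∫ x in (0:ℝ)..1, x^(n+1) * (1-x)^k := by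
      rw [integral_mul_deriv_eq_deriv_mul hu hv
        (Continuous.intervalIntegrable (by continuity) _ _)
        (Continuous.intervalIntegrable (by continuity) _ _)]
      simp only [sub_self, zero_pow (by omega : k+1 ≠ 0), zero_pow (by omega : n+1 ≠ 0),
        zero_mul, mul_zero, zero_div, sub_zero, zero_sub, one_mul, zero_sub]
      rw [← intervalIntegral.integral_neg, ← intervalIntegral.integral_const_mul]
      apply intervalIntegral.integral_congr
      intro x _
      have : (n:ℝ) + 1 ≠ 0 := by positivity
      field_simp
    have hih := ih (n+1)
    have e : n + 1 + k + 1 = n + (k + 1) + 1 := by omega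
    rw [e] at hih
    rw [show (∫ x in (0:ℝ)..1, x ^ n * (1 - x) ^ (k+1)) = ∫ x in (0:ℝ)..1, (1-x)^(k+1) * x^n by
      apply intervalIntegral.integral_congr; intro x _; ring, h1, hih,
      Nat.factorial_succ n, Nat.factorial_succ k]
    push_cast
    have h2 : ((n + (k+1) + 1).factorial : ℝ) ≠ 0 := by positivity
    have h3 : (n:ℝ) + 1 ≠ 0 := by positivity
    field_simp

lemma beta_one (k : ℕ) : ∫ x in (0:ℝ)..1, (1 - x) ^ k = 1/((k:ℝ)+1) := by
  rw [show (∫ x in (0:ℝ)..1, (1-x)^k) = ∫ x in (0:ℝ)..1, x^0 * (1-x)^k by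
    apply intervalIntegral.integral_congr; intro x _; ring, beta_nat k 0]
  rw [Nat.factorial_succ]
  have : (k.factorial : ℝ) ≠ 0 := by positivity
  push_cast
  simp only [zero_add]
  field_simp
  ring

lemma beta_choose (n k : ℕ) : ∫ x in (0:ℝ)..1, x ^ n * (1 - x) ^ k
    = 1/(((k:ℝ)+1) * ((n + k + 1).choose (k+1))) := by
  rw [beta_nat k n]
  have hcc := Nat.choose_mul_factorial_mul_factorial (show k+1 ≤ n+k+1 by omega)
  rw [show n+k+1-(k+1) = n by omega] at hcc
  have hC : (0:ℝ) < ((n+k+1).choose (k+1) : ℝ) := by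
    exact_mod_cast Nat.choose_pos (show k+1 ≤ n+k+1 by omega)
  have hcast : ((n+k+1).factorial : ℝ)
      = ((n+k+1).choose (k+1) : ℝ) * (k+1).factorial * n.factorial := by
    exact_mod_cast congrArg (Nat.cast (R := ℝ)) hcc.symm
  rw [hcast, Nat.factorial_succ k]
  have h1 : (k.factorial : ℝ) ≠ 0 := by positivity
  have h2 : (n.factorial : ℝ) ≠ 0 := by positivity
  push_cast
  field_simp

lemma geom_div {x : ℝ} (hx : x ≠ 1) (n : ℕ) :
    (1 - x^n)/(1-x) = ∑ i ∈ Finset.range n, x^i := by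
  have hgeom : (∑ i ∈ Finset.range n, x^i) * (x - 1) = x^n - 1 := geom_sum_mul x n
  have hx1' : (1:ℝ) - x ≠ 0 := fun h => hx (by linarith)
  field_simp
  linear_combination hgeom

lemma tsum_closed (n : ℕ) (a : ℝ) (ha : 0 ≤ a) {x : ℝ} (hx : x ∈ Ioo (0:ℝ) 1) :
    ∑' k : ℕ, (1 - x^n) * (1-x)^k * ((1/(a+1))^(k+1)/((k:ℝ)+1))
      = (1 - x^n)/(1-x) * (Real.log (a+1) - Real.log (x+a)) := by
  obtain ⟨hx0, hx1⟩ := hx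
  have ha1 : (0:ℝ) < a + 1 := by linarith
  set z : ℝ := 1/(a+1) with hz
  have hz0 : 0 < z := by positivity
  have hz1 : z ≤ 1 := by rw [hz, div_le_one ha1]; linarith
  have hy0 : 0 ≤ (1-x)*z := by nlinarith
  have hy1 : (1-x)*z < 1 := by nlinarith
  have hy : |(1-x)*z| < 1 := by rw [abs_of_nonneg hy0]; exact hy1
  have hlog := Real.hasSum_pow_div_log_of_abs_lt_one hy
  have h1 : 1 - (1-x)*z = (x+a)*z := by rw [hz]; field_simp; ring
  have h2 : Real.log (1 - (1-x)*z) = Real.log (x+a) - Real.log (a+1) := by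
    rw [h1, Real.log_mul (by positivity) (by positivity), hz, one_div, Real.log_inv]
    ring
  rw [h2] at hlog
  have hx1' : (1:ℝ) - x ≠ 0 := by linarith
  have hmul := hlog.mul_left ((1 - x^n)/(1-x))
  have hfun : (fun k : ℕ => (1 - x^n)/(1-x) * (((1-x)*z)^(k+1)/((k:ℝ)+1)))
      = fun k : ℕ => (1 - x^n) * (1-x)^k * (z^(k+1)/((k:ℝ)+1)) := by
    funext k
    rw [mul_pow, pow_succ (1-x) k]
    field_simp
  rw [hfun] at hmul
  rw [hmul.tsum_eq]
  ring

lemma key_pointwise (n : ℕ) (a : ℝ) (ha : 0 ≤ a) {x : ℝ} (hx : x ∈ Ioo (0:ℝ) 1) :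
    (1 - x^n)/(1-x) * Real.log (x+a) =
      (∑ i ∈ Finset.range n, x^i) * Real.log (a+1)
        - ∑' k : ℕ, (1 - x^n) * (1-x)^k * ((1/(a+1))^(k+1)/((k:ℝ)+1)) := by
  rw [tsum_closed n a ha hx, geom_div (ne_of_lt hx.2) n]
  ring

/-- For every nonnegative integer `n` and every real `a ≥ 0`,
`∫₀¹ (1-xⁿ)/(1-x) log(x+a) dx
  = H_n log(a+1) - Li₂(1/(a+1)) + ∑_{k=1}^∞ 1/(k²(a+1)^k C(n+k,k))`. -/
theorem integral_log_eq_harmonic_sub_dilog (n : ℕ) (a : ℝ) (ha : 0 ≤ a) :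
    ∫ x in (0 : ℝ)..1, (1 - x ^ n) / (1 - x) * Real.log (x + a) =
      H n * Real.log (a + 1) - Li2 (1 / (a + 1)) +
        ∑' k : ℕ,
          1 / (((k : ℝ) + 1) ^ 2 * (a + 1) ^ (k + 1) * (Nat.choose (n + (k + 1)) (k + 1) : ℝ)) := by
  have ha1 : (0:ℝ) < a + 1 := by linarith
  have hz0 : (0:ℝ) < 1/(a+1) := by positivity
  have hz1 : 1/(a+1) ≤ (1:ℝ) := by rw [div_le_one ha1]; linarith
  have hioo : ∀ f : ℝ → ℝ, (∫ x in (0:ℝ)..1, f x) = ∫ x in Ioo (0:ℝ) 1, f x := fun f => by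
    rw [intervalIntegral.integral_of_le zero_le_one, integral_Ioc_eq_integral_Ioo]
  have hcont : ∀ {f : ℝ → ℝ}, Continuous f → IntegrableOn f (Ioo (0:ℝ) 1) := fun hf =>
    (intervalIntegrable_iff_integrableOn_Ioo_of_le zero_le_one).mp (hf.intervalIntegrable 0 1)
  have hsum2 : Summable (fun k : ℕ => 1/((k:ℝ)+1)^2) := by
    have h := (_root_.summable_nat_add_iff 1).mpr
      (Real.summable_one_div_nat_pow.mpr one_lt_two)
    convert h using 2 with k
    rfl
    push_cast
    ring
  -- the summand functions
  set F : ℕ → ℝ → ℝ := fun k x => (1 - x^n) * (1-x)^k * ((1/(a+1))^(k+1)/((k:ℝ)+1)) with hF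
  -- step A : reduce to Ioo and use pointwise identity
  rw [hioo, setIntegral_congr_fun measurableSet_Ioo
    (fun x hx => key_pointwise n a ha hx)]
  -- integrability of first part
  have hInt1 : IntegrableOn (fun x : ℝ => (∑ i ∈ Finset.range n, x^i) * Real.log (a+1))
      (Ioo (0:ℝ) 1) := hcont ((by
        apply Continuous.mul _ continuous_const
        exact continuous_finset_sum _ fun i _ => continuous_pow i : Continuous _))
  -- integrability of the closed form of the tsum
  have hInt2' : IntegrableOn
      (fun x : ℝ => (1 - x^n)/(1-x) * (Real.log (a+1) - Real.log (x+a))) (Ioo (0:ℝ) 1) := by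
    have hbnd : IntegrableOn (fun x : ℝ => (n:ℝ) * (Real.log (a+1) + 2 * x^(-(1/2) : ℝ)))
        (Ioo (0:ℝ) 1) := by
      apply Integrable.const_mul
      apply Integrable.add
      · exact integrableOn_const measure_Ioo_lt_top.ne
      · exact ((intervalIntegrable_iff_integrableOn_Ioo_of_le zero_le_one).mp
          (intervalIntegral.intervalIntegrable_rpow' (by norm_num))).const_mul 2
    have hmeas : AEStronglyMeasurable
        (fun x : ℝ => (1 - x^n)/(1-x) * (Real.log (a+1) - Real.log (x+a)))
        (volume.restrict (Ioo (0:ℝ) 1)) := by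
      apply Measurable.aestronglyMeasurable
      apply Measurable.mul
      · exact (measurable_const.sub (measurable_id.pow_const n)).div
          (measurable_const.sub measurable_id)
      · exact measurable_const.sub (Real.measurable_log.comp (measurable_id.add_const a))
    apply Integrable.mono' hbnd hmeas
    rw [ae_restrict_iff' measurableSet_Ioo]
    filter_upwards with x hx
    obtain ⟨hx0, hx1⟩ := hx
    have hS : (1 - x^n)/(1-x) = ∑ i ∈ Finset.range n, x^i := geom_div (ne_of_lt hx1) n
    have hS0 : 0 ≤ (1 - x^n)/(1-x) := by
      rw [hS]
      exact Finset.sum_nonneg fun i _ => pow_nonneg hx0.le i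
    have hSn : (1 - x^n)/(1-x) ≤ (n:ℝ) := by
      rw [hS]
      calc ∑ i ∈ Finset.range n, x^i ≤ ∑ i ∈ Finset.range n, (1:ℝ) :=
            Finset.sum_le_sum fun i _ => pow_le_one₀ hx0.le hx1.le
        _ = (n:ℝ) := by simp
    have hL0 : 0 ≤ Real.log (a+1) := Real.log_nonneg (by linarith)
    have hlog1 : Real.log (x+a) ≤ Real.log (a+1) :=
      Real.log_le_log (by positivity) (by linarith)
    have hlogx : Real.log x ≤ Real.log (x+a) := Real.log_le_log hx0 (by linarith)
    have hrp0 : (0:ℝ) < x^(-(1/2) : ℝ) := Real.rpow_pos_of_pos hx0 _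
    have hlx : -Real.log x ≤ 2 * x^(-(1/2) : ℝ) := by
      have h1 : Real.log (x^(-(1/2) : ℝ)) ≤ x^(-(1/2) : ℝ) - 1 :=
        Real.log_le_sub_one_of_pos hrp0
      rw [Real.log_rpow hx0] at h1
      nlinarith
    have hD : |Real.log (a+1) - Real.log (x+a)| ≤ Real.log (a+1) + 2 * x^(-(1/2) : ℝ) := by
      rw [abs_of_nonneg (by linarith)]
      nlinarith
    rw [Real.norm_eq_abs, abs_mul, abs_of_nonneg hS0]
    apply mul_le_mul hSn hD (abs_nonneg _) (Nat.cast_nonneg n)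
  have hInt2 : IntegrableOn (fun x : ℝ => ∑' k : ℕ, F k x) (Ioo (0:ℝ) 1) := by
    apply Integrable.congr hInt2'
    filter_upwards [ae_restrict_mem measurableSet_Ioo] with x hx
    exact (tsum_closed n a ha hx).symm
  rw [integral_sub hInt1 hInt2]
  -- value of the first integral
  have hI1 : ∫ x in Ioo (0:ℝ) 1, (∑ i ∈ Finset.range n, x^i) * Real.log (a+1)
      = H n * Real.log (a+1) := by
    rw [← hioo]
    rw [show (fun x : ℝ => (∑ i ∈ Finset.range n, x^i) * Real.log (a+1))
        = fun x : ℝ => ∑ i ∈ Finset.range n, x^i * Real.log (a+1) from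
      funext fun x => Finset.sum_mul _ _ _]
    rw [intervalIntegral.integral_finset_sum (f := fun i x => x^i * Real.log (a+1))
      (fun i _ => Continuous.intervalIntegrable ((continuous_pow i).mul continuous_const) 0 1)]
    rw [H, Finset.sum_mul]
    apply Finset.sum_congr rfl
    intro i _
    rw [intervalIntegral.integral_mul_const, integral_pow]
    norm_num
  rw [hI1]
  -- swap sum and integral
  have hFk_int : ∀ k : ℕ, IntegrableOn (F k) (Ioo (0:ℝ) 1) := fun k => hcont
    (((continuous_const.sub (continuous_pow n)).mul
      ((continuous_const.sub continuous_id).pow k)).mul continuous_const)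
  have hbeta1 : ∀ k : ℕ, ∫ x in Ioo (0:ℝ) 1, (1-x)^k = 1/((k:ℝ)+1) := fun k => by
    rw [← hioo]; exact beta_one k
  have hnorm : ∀ k : ℕ, (∫ x in Ioo (0:ℝ) 1, ‖F k x‖) ≤ 1/((k:ℝ)+1)^2 := by
    intro k
    have hc0 : (0:ℝ) ≤ (1/(a+1))^(k+1)/((k:ℝ)+1) := by positivity
    have hb : ∀ x ∈ Ioo (0:ℝ) 1,
        ‖F k x‖ ≤ (1-x)^k * ((1/(a+1))^(k+1)/((k:ℝ)+1)) := by
      intro x hx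
      obtain ⟨hx0, hx1⟩ := hx
      rw [hF]
      simp only [Real.norm_eq_abs, abs_mul]
      rw [abs_of_nonneg (by positivity : (0:ℝ) ≤ (1/(a+1))^(k+1)/((k:ℝ)+1)),
        abs_of_nonneg (pow_nonneg (by linarith : (0:ℝ) ≤ 1 - x) k)]
      have hA : |1 - x^n| ≤ 1 := by
        rw [abs_of_nonneg (by nlinarith [(pow_le_one₀ hx0.le hx1.le : x^n ≤ 1)] :
          (0:ℝ) ≤ 1 - x^n)]
        nlinarith [pow_nonneg hx0.le n]
      calc |1 - x^n| * (1-x)^k * ((1/(a+1))^(k+1)/((k:ℝ)+1))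
          ≤ 1 * (1-x)^k * ((1/(a+1))^(k+1)/((k:ℝ)+1)) := by
            have h1 : (0:ℝ) ≤ (1-x)^k := pow_nonneg (by linarith) k
            gcongr
        _ = (1-x)^k * ((1/(a+1))^(k+1)/((k:ℝ)+1)) := by ring
    calc (∫ x in Ioo (0:ℝ) 1, ‖F k x‖)
        ≤ ∫ x in Ioo (0:ℝ) 1, (1-x)^k * ((1/(a+1))^(k+1)/((k:ℝ)+1)) :=
          setIntegral_mono_on ((hFk_int k).norm)
            (hcont (((continuous_const.sub continuous_id).pow k).mul continuous_const))
            measurableSet_Ioo hb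
      _ = (1/((k:ℝ)+1)) * ((1/(a+1))^(k+1)/((k:ℝ)+1)) := by
          rw [← hioo, intervalIntegral.integral_mul_const, beta_one]
      _ = (1/(a+1))^(k+1)/((k:ℝ)+1)^2 := by
          have hk1 : ((k:ℝ)+1) ≠ 0 := by positivity
          field_simp
      _ ≤ 1/((k:ℝ)+1)^2 := by
          have hzp : (1/(a+1))^(k+1) ≤ (1:ℝ) := pow_le_one₀ hz0.le hz1
          gcongr
  have hsummable : Summable fun k : ℕ => ∫ x in Ioo (0:ℝ) 1, ‖F k x‖ :=
    Summable.of_nonneg_of_le (fun k => integral_nonneg fun x => norm_nonneg _) hnorm hsum2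
  have hswap : ∫ x in Ioo (0:ℝ) 1, ∑' k : ℕ, F k x = ∑' k : ℕ, ∫ x in Ioo (0:ℝ) 1, F k x :=
    (integral_tsum_of_summable_integral_norm (fun k => hFk_int k) hsummable).symm
  rw [hswap]
  have hC : ∀ k : ℕ, (0:ℝ) < ((n+k+1).choose (k+1) : ℝ) := fun k => by
    exact_mod_cast Nat.choose_pos (show k+1 ≤ n+k+1 by omega)
  have hIk : ∀ k : ℕ, ∫ x in Ioo (0:ℝ) 1, F k x
      = (1/(a+1))^(k+1)/(((k:ℝ)+1)^2)
        - (1/(a+1))^(k+1)/(((k:ℝ)+1)^2 * ((n+k+1).choose (k+1))) := by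
    intro k
    rw [← hioo]
    rw [show F k = fun x : ℝ => ((1-x)^k - x^n*(1-x)^k) * ((1/(a+1))^(k+1)/((k:ℝ)+1)) from
      funext fun x => by rw [hF]; ring]
    rw [intervalIntegral.integral_mul_const,
      intervalIntegral.integral_sub (f := fun x => (1-x)^k) (g := fun x => x^n*(1-x)^k)
        (Continuous.intervalIntegrable ((continuous_const.sub continuous_id').pow k) 0 1)
        (Continuous.intervalIntegrable ((continuous_pow n).mul
          ((continuous_const.sub continuous_id').pow k)) 0 1),
      beta_one, beta_choose]
    have h1 := (hC k).ne'
    have hk1 : ((k:ℝ)+1) ≠ 0 := by positivity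
    field_simp
  rw [tsum_congr hIk]
  have hu_s : Summable (fun k : ℕ => (1/(a+1))^(k+1)/(((k:ℝ)+1)^2)) := by
    apply Summable.of_nonneg_of_le (fun k => by positivity) _ hsum2
    intro k
    exact div_le_div₀ zero_le_one (pow_le_one₀ hz0.le hz1) (by positivity) le_rfl
  have hv_s : Summable (fun k : ℕ =>
      (1/(a+1))^(k+1)/(((k:ℝ)+1)^2 * ((n+k+1).choose (k+1)))) := by
    apply Summable.of_nonneg_of_le (fun k => by positivity) _ hsum2
    intro k
    apply div_le_div₀ zero_le_one (pow_le_one₀ hz0.le hz1) (by positivity)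
    have h1 : (1:ℝ) ≤ ((n+k+1).choose (k+1) : ℝ) := by
      exact_mod_cast Nat.one_le_iff_ne_zero.mpr (Nat.choose_pos (show k+1 ≤ n+k+1 by omega)).ne'
    nlinarith [sq_nonneg ((k:ℝ)+1)]
  rw [Summable.tsum_sub hu_s hv_s]
  have hLi2 : Li2 (1/(a+1)) = ∑' k : ℕ, (1/(a+1))^(k+1)/(((k:ℝ)+1)^2) := rfl
  have hresum : (∑' k : ℕ,
        1 / (((k : ℝ) + 1) ^ 2 * (a + 1) ^ (k + 1) * (Nat.choose (n + (k + 1)) (k + 1) : ℝ)))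
      = ∑' k : ℕ, (1/(a+1))^(k+1)/(((k:ℝ)+1)^2 * ((n+k+1).choose (k+1))) := by
    apply tsum_congr
    intro k
    rw [show n + (k+1) = n + k + 1 from by omega, div_pow, one_pow]
    have h1 := (hC k).ne'
    have h2 : ((a:ℝ)+1)^(k+1) ≠ 0 := by positivity
    field_simp
  rw [hLi2, hresum]
  ring
end

section
/- For every positive integer $n$ and every real number $a > 0$, $\int_{0}^{1} \frac{1-x^n}{1-x} \log(x+a)\, dx = H_n \log(a+1) - \sum_{k=1}^{n} \frac{(-a)^k}{k} \sum_{j=1}^{k} \frac{(-1/a)^j}{j} - \log(1 + 1/a) \sum_{k=1}^{n} \frac{(-a)^k}{k}$. -/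
open Finset intervalIntegral MeasureTheory

lemma hasDerivAt_F (a : ℝ) (ha : 0 < a) (k : ℕ) (x : ℝ) (hx : 0 < x + a) :
    HasDerivAt (fun x : ℝ => x ^ (k+1) / ((k:ℝ)+1) * Real.log (x + a)
      - 1 / ((k:ℝ)+1) * ((∑ i ∈ Finset.range (k+1), (-a) ^ (k-i) * (x ^ (i+1) / ((i:ℝ)+1)))
        + (-a) ^ (k+1) * Real.log (x + a)))
      (x ^ k * Real.log (x + a)) x := by
  have hlog : HasDerivAt (fun x : ℝ => Real.log (x + a)) (1 / (x + a)) x := by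
    simpa using (((hasDerivAt_id x).add_const a).log hx.ne')
  have hpow : ∀ m : ℕ, HasDerivAt (fun x : ℝ => x ^ (m+1) / ((m:ℝ)+1)) (x ^ m) x := by
    intro m
    have h := (hasDerivAt_pow (m+1) x).div_const ((m:ℝ)+1)
    refine h.congr_deriv ?_
    have : ((m:ℝ)+1) ≠ 0 := by positivity
    rw [Nat.add_sub_cancel]; push_cast
    field_simp
  have hsum : HasDerivAt (fun x : ℝ => ∑ i ∈ Finset.range (k+1), (-a) ^ (k-i) * (x ^ (i+1) / ((i:ℝ)+1)))
      (∑ i ∈ Finset.range (k+1), (-a) ^ (k-i) * x ^ i) x :=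
    HasDerivAt.fun_sum fun i _ => (hpow i).const_mul _
  have hmain := ((hpow k).mul hlog).sub
    (((hsum.add (hlog.const_mul ((-a) ^ (k+1))))).const_mul (1 / ((k:ℝ)+1)))
  refine hmain.congr_deriv ?_
  have key : (∑ i ∈ Finset.range (k+1), (-a) ^ (k-i) * x ^ i) * (x + a)
      = x ^ (k+1) - (-a) ^ (k+1) := by
    have h := geom_sum₂_mul x (-a) (k+1)
    simp only [Nat.add_sub_cancel, sub_neg_eq_add] at h
    rw [← h]
    congr 1
    exact Finset.sum_congr rfl fun i _ => by ring
  have hne : x + a ≠ 0 := hx.ne'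
  have hk : ((k:ℝ)+1) ≠ 0 := by positivity
  field_simp
  nlinarith [key, sq_nonneg (x+a)]

lemma Ik (a : ℝ) (ha : 0 < a) (k : ℕ) :
    ∫ x in (0:ℝ)..1, x ^ k * Real.log (x + a)
      = Real.log (a+1) / ((k:ℝ)+1)
        - 1 / ((k:ℝ)+1) * ∑ i ∈ Finset.range (k+1), (-a) ^ (k-i) / ((i:ℝ)+1)
        - (-a) ^ (k+1) / ((k:ℝ)+1) * Real.log (1 + 1/a) := by
  have hpos : ∀ x ∈ Set.uIcc (0:ℝ) 1, 0 < x + a := by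
    rw [Set.uIcc_of_le zero_le_one]
    intro x hx
    have := hx.1
    linarith
  have hint : IntervalIntegrable (fun x : ℝ => x ^ k * Real.log (x + a)) volume 0 1 := by
    apply ContinuousOn.intervalIntegrable
    apply ContinuousOn.mul (by fun_prop)
    intro x hx
    have hi : ContinuousAt (fun y : ℝ => y + a) x := by fun_prop
    have hl : ContinuousAt Real.log (x + a) := Real.continuousAt_log (hpos x hx).ne'
    have hc : ContinuousAt (Real.log ∘ (fun y : ℝ => y + a)) x := ContinuousAt.comp (f := fun y : ℝ => y + a) (x := x) hl hi
    exact hc.continuousWithinAt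
  rw [intervalIntegral.integral_eq_sub_of_hasDerivAt
    (fun x hx => hasDerivAt_F a ha k x (hpos x hx)) hint]
  have hlog1 : Real.log (1 + 1/a) = Real.log (1 + a) - Real.log a := by
    rw [← Real.log_div (by positivity) ha.ne']
    congr 1
    field_simp
    ring
  simp only [one_pow, zero_pow (Nat.succ_ne_zero _), zero_div, mul_zero, zero_mul,
    Finset.sum_const_zero, zero_add, hlog1]
  have h1 : Real.log (1 + a) = Real.log (a + 1) := by rw [add_comm]
  rw [h1]
  have : (∑ i ∈ Finset.range (k+1), (-a) ^ (k-i) * ((1:ℝ) / ((i:ℝ)+1)))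
      = ∑ i ∈ Finset.range (k+1), (-a) ^ (k-i) / ((i:ℝ)+1) := by
    exact Finset.sum_congr rfl fun i _ => by ring
  rw [this]
  ring

lemma sum_Icc_eq (f : ℕ → ℝ) (n : ℕ) :
    ∑ k ∈ Finset.Icc 1 n, f k = ∑ k ∈ Finset.range n, f (k+1) := by
  rw [← Finset.Ico_add_one_right_eq_Icc, Finset.sum_Ico_eq_sum_range]
  simp [add_comm]


/-- For every positive integer `n` and every real `a > 0`,
`∫₀¹ (1-xⁿ)/(1-x) log(x+a) dx
  = H_n log(a+1) - ∑_{k=1}^n ((-a)^k/k) ∑_{j=1}^k ((-1/a)^j/j)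
    - log(1+1/a) ∑_{k=1}^n (-a)^k/k`. -/
theorem integral_log_eq_finite_sums (n : ℕ) (hn : 0 < n) (a : ℝ) (ha : 0 < a) :
    ∫ x in (0 : ℝ)..1, (1 - x ^ n) / (1 - x) * Real.log (x + a) =
      H n * Real.log (a + 1) -
        (∑ k ∈ Finset.Icc 1 n, (-a) ^ k / (k : ℝ) *
          ∑ j ∈ Finset.Icc 1 k, (-1 / a) ^ j / (j : ℝ)) -
        Real.log (1 + 1 / a) * ∑ k ∈ Finset.Icc 1 n, (-a) ^ k / (k : ℝ) := by
  have hpos : ∀ x ∈ Set.uIcc (0:ℝ) 1, 0 < x + a := by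
    rw [Set.uIcc_of_le zero_le_one]; intro x hx; have := hx.1; linarith
  -- step 1: replace integrand a.e. by the sum
  have hstep1 : ∫ x in (0 : ℝ)..1, (1 - x ^ n) / (1 - x) * Real.log (x + a)
      = ∫ x in (0:ℝ)..1, ∑ i ∈ Finset.range n, x ^ i * Real.log (x + a) := by
    apply intervalIntegral.integral_congr_ae
    have hne : ∀ᵐ x : ℝ, x ≠ (1:ℝ) := by
      have h0 : MeasureTheory.volume ({1} : Set ℝ) = 0 := Real.volume_singleton
      have h2 := (MeasureTheory.measure_eq_zero_iff_ae_notMem (μ := volume)).1 h0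
      simpa using h2
    filter_upwards [hne] with x hx _
    rw [← Finset.sum_mul]
    congr 1
    rw [geom_sum_eq hx n, show (x:ℝ) ^ n - 1 = -(1 - x ^ n) by ring,
      show (x:ℝ) - 1 = -(1 - x) by ring, neg_div_neg_eq]
  rw [hstep1]
  have hint : ∀ i ∈ Finset.range n,
      IntervalIntegrable (fun x : ℝ => x ^ i * Real.log (x + a)) volume 0 1 := by
    intro i _
    apply ContinuousOn.intervalIntegrable
    apply ContinuousOn.mul (by fun_prop)
    intro x hx
    have hi : ContinuousAt (fun y : ℝ => y + a) x := by fun_prop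
    have hl : ContinuousAt Real.log (x + a) := Real.continuousAt_log (hpos x hx).ne'
    have hc : ContinuousAt (Real.log ∘ (fun y : ℝ => y + a)) x :=
      ContinuousAt.comp (f := fun y : ℝ => y + a) (x := x) hl hi
    exact hc.continuousWithinAt
  rw [intervalIntegral.integral_finset_sum hint]
  have hIk : ∀ k ∈ Finset.range n, (∫ x in (0:ℝ)..1, x ^ k * Real.log (x + a))
      = Real.log (a+1) / ((k:ℝ)+1)
        - 1 / ((k:ℝ)+1) * ∑ i ∈ Finset.range (k+1), (-a) ^ (k-i) / ((i:ℝ)+1)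
        - (-a) ^ (k+1) / ((k:ℝ)+1) * Real.log (1 + 1/a) := fun k _ => Ik a ha k
  rw [Finset.sum_congr rfl hIk, Finset.sum_sub_distrib, Finset.sum_sub_distrib]
  congr 1
  congr 1
  · -- first sum = H n * log (a+1)
    rw [H, Finset.sum_mul]
    exact Finset.sum_congr rfl fun i _ => by push_cast; ring
  · -- second sum
    rw [sum_Icc_eq]
    apply Finset.sum_congr rfl
    intro K _
    rw [sum_Icc_eq]
    rw [Finset.mul_sum, Finset.mul_sum]
    apply Finset.sum_congr rfl
    intro i hi
    have hiK : i ≤ K := Nat.lt_succ_iff.mp (Finset.mem_range.mp hi)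
    have hp : (-a) ^ (K+1) * (-1/a) ^ (i+1) = (-a) ^ (K-i) := by
      have h1 : (-a) * (-1/a) = 1 := by field_simp
      have h2 : (-a) ^ (K+1) = (-a) ^ (K-i) * (-a) ^ (i+1) := by
        rw [← pow_add]; congr 1; omega
      rw [h2, mul_assoc, ← mul_pow, h1, one_pow, mul_one]
    push_cast
    rw [← hp]
    ring
  · -- third sum
    rw [sum_Icc_eq, Finset.mul_sum]
    apply Finset.sum_congr rfl
    intro k _
    push_cast
    ring
end
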